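/- arXiv:1412.4221 — 3 statements merged into one kernel-verified Lean document; each statement's English description precedes it below -/
import Mathlib

section
/- Let n, s, m be positive integers with m < ns, and let C' be a real number greater than 1/2. If m/s ≥ (√(C' + 1/16) + 3/4)/(C' − 1/2), then for every m-dimensional F₂-linear subspace 𝒫 of M_{s,n}(F₂) one has WAFOM(𝒫) ≥ 2^{−C'·m²/s}. -/
open scoped BigOperators

/-- The Dick weight of an `s × n` matrix over `𝔽₂`: `μ(X) = ∑_{i,j} j · x_{i,j}`
(with columns indexed `1, …, n`, i.e. column `j : Fin n` contributes `j+1`). -/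
def dick {s n : ℕ} (X : Matrix (Fin s) (Fin n) (ZMod 2)) : ℕ :=
  ∑ i : Fin s, ∑ j : Fin n, if X i j = 1 then (j : ℕ) + 1 else 0

/-- The orthogonal complement of a subspace of `M_{s,n}(𝔽₂)` with respect to the
inner product `A · B = ∑_{i,j} a_{i,j} b_{i,j}`. -/
def ortho {s n : ℕ} (P : Submodule (ZMod 2) (Matrix (Fin s) (Fin n) (ZMod 2))) :
    Submodule (ZMod 2) (Matrix (Fin s) (Fin n) (ZMod 2)) where
  carrier := {X | ∀ A ∈ P, ∑ i : Fin s, ∑ j : Fin n, A i j * X i j = 0}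
  zero_mem' := by intro A _; simp
  add_mem' := by
    intro X Y hX hY A hA
    have h1 := hX A hA
    have h2 := hY A hA
    calc (∑ i : Fin s, ∑ j : Fin n, A i j * (X + Y) i j)
        = (∑ i : Fin s, ∑ j : Fin n, A i j * X i j)
          + ∑ i : Fin s, ∑ j : Fin n, A i j * Y i j := by
          simp [Matrix.add_apply, mul_add, Finset.sum_add_distrib]
      _ = 0 := by rw [h1, h2, add_zero]
  smul_mem' := by
    intro c X hX A hA
    have h := hX A hA
    calc (∑ i : Fin s, ∑ j : Fin n, A i j * (c • X) i j)
        = c * ∑ i : Fin s, ∑ j : Fin n, A i j * X i j := by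
          simp [Matrix.smul_apply, smul_eq_mul, Finset.mul_sum, mul_left_comm]
      _ = 0 := by rw [h, mul_zero]

-- WAFOM of a subspace `P` of `M_{s,n}(𝔽₂)`: `∑_{X ∈ P^⊥ \ {O}} 2^{-μ(X)}`.
open Classical in
noncomputable def wafom {s n : ℕ}
    (P : Submodule (ZMod 2) (Matrix (Fin s) (Fin n) (ZMod 2))) : ℝ :=
  ∑ X : Matrix (Fin s) (Fin n) (ZMod 2),
    if X ∈ ortho P ∧ X ≠ 0 then (2 : ℝ) ^ (-(dick X : ℤ)) else 0

/-- The minimum Dick weight of `P^⊥`: `δ = min_{X ∈ P^⊥ \ {O}} μ(X)`. -/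
noncomputable def minWeight {s n : ℕ}
    (P : Submodule (ZMod 2) (Matrix (Fin s) (Fin n) (ZMod 2))) : ℕ :=
  sInf {k | ∃ X ∈ ortho P, X ≠ 0 ∧ dick X = k}

set_option maxHeartbeats 2000000 in
/-- A lower bound on WAFOM (Theorem 3.1): for `C' > 1/2` and
`m/s ≥ (√(C'+1/16)+3/4)/(C'-1/2)`, every `m`-dimensional subspace `P` of
`M_{s,n}(𝔽₂)` satisfies `WAFOM(P) ≥ 2^{-C'm²/s}`. -/
theorem wafom_lower_bound (n s m : ℕ) (hn : 0 < n) (hs : 0 < s) (hm : 0 < m)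
    (hmns : m < n * s) (C' : ℝ) (hC' : 1 / 2 < C')
    (hratio : (m : ℝ) / s ≥ (Real.sqrt (C' + 1 / 16) + 3 / 4) / (C' - 1 / 2))
    (P : Submodule (ZMod 2) (Matrix (Fin s) (Fin n) (ZMod 2)))
    (hdim : Module.finrank (ZMod 2) P = m) :
    wafom P ≥ (2 : ℝ) ^ (-(C' * (m : ℝ) ^ 2 / (s : ℝ))) := by

  classical
  have hsR : (0:ℝ) < s := by exact_mod_cast hs
  set t : ℕ := m / s + 1 with ht
  have hts : m + 1 ≤ s * t := by
    have h1 : m < (m / s + 1) * s := (Nat.div_lt_iff_lt_mul hs).1 (Nat.lt_succ_self _)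
    have h2 : (m / s + 1) * s = s * t := by rw [ht]; ring
    omega
  have htn : t ≤ n := by
    have : m / s < n := (Nat.div_lt_iff_lt_mul hs).2 hmns
    omega
  -- the bilinear form
  let B : Matrix (Fin s) (Fin n) (ZMod 2) →ₗ[ZMod 2]
      Matrix (Fin s) (Fin n) (ZMod 2) →ₗ[ZMod 2] ZMod 2 :=
    LinearMap.mk₂ (ZMod 2) (fun A X => ∑ i, ∑ j, A i j * X i j)
      (by intros; simp [Matrix.add_apply, add_mul, Finset.sum_add_distrib])
      (by intros; simp [Matrix.smul_apply, smul_eq_mul, Finset.mul_sum, mul_assoc])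
      (by intros; simp [Matrix.add_apply, mul_add, Finset.sum_add_distrib])
      (by intros; simp [Matrix.smul_apply, smul_eq_mul, Finset.mul_sum, mul_left_comm])
  let φ : Matrix (Fin s) (Fin n) (ZMod 2) →ₗ[ZMod 2] Module.Dual (ZMod 2) P :=
    (LinearMap.lcomp (ZMod 2) (ZMod 2) P.subtype).comp B.flip
  have hker : ∀ X, X ∈ LinearMap.ker φ → X ∈ ortho P := by
    intro X hX A hA
    have h := LinearMap.congr_fun (LinearMap.mem_ker.1 hX) ⟨A, hA⟩
    simpa [φ, B] using h
  have hfrk : Module.finrank (ZMod 2) (Matrix (Fin s) (Fin n) (ZMod 2)) = s * n := by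
    simp [Module.finrank_matrix]
  have hkerrank : Module.finrank (ZMod 2) (LinearMap.ker φ) + m ≥ s * n := by
    have h1 := LinearMap.finrank_range_add_finrank_ker φ
    rw [hfrk] at h1
    have h2 : Module.finrank (ZMod 2) (LinearMap.range φ) ≤ m := by
      refine le_trans (Submodule.finrank_le _) ?_
      rw [Subspace.dual_finrank_eq, hdim]
    omega
  -- embedding of s × t matrices
  let ψ : Matrix (Fin s) (Fin t) (ZMod 2) →ₗ[ZMod 2] Matrix (Fin s) (Fin n) (ZMod 2) :=
    { toFun := fun Y i j => if h : (j : ℕ) < t then Y i ⟨j, h⟩ else 0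
      map_add' := by
        intro Y Z; funext i j
        show (if h : (j : ℕ) < t then (Y + Z) i ⟨j, h⟩ else 0) = (if h : (j : ℕ) < t then Y i ⟨j, h⟩ else 0) + (if h : (j : ℕ) < t then Z i ⟨j, h⟩ else 0)
        by_cases h : (j : ℕ) < t <;> simp [h]
      map_smul' := by
        intro c Y; funext i j
        show (if h : (j : ℕ) < t then (c • Y) i ⟨j, h⟩ else 0) = c * (if h : (j : ℕ) < t then Y i ⟨j, h⟩ else 0)
        by_cases h : (j : ℕ) < t <;> simp [h] }
  have hψinj : Function.Injective ψ := by
    intro Y Z hYZ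
    funext i j
    have h := congrFun (congrFun hYZ i) ⟨(j : ℕ), lt_of_lt_of_le j.2 htn⟩
    change (if h' : (j : ℕ) < t then Y i ⟨j, h'⟩ else 0) = (if h' : (j : ℕ) < t then Z i ⟨j, h'⟩ else 0) at h
    simpa [ψ, j.isLt] using h
  have hVrank : Module.finrank (ZMod 2) (LinearMap.range ψ) = s * t := by
    rw [LinearMap.finrank_range_of_inj hψinj]
    simp [Module.finrank_matrix]
  have hWrank : 0 < Module.finrank (ZMod 2) (LinearMap.range ψ ⊓ LinearMap.ker φ :
      Submodule (ZMod 2) (Matrix (Fin s) (Fin n) (ZMod 2))) := by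
    have h1 := Submodule.finrank_sup_add_finrank_inf_eq (LinearMap.range ψ) (LinearMap.ker φ)
    have h2 : Module.finrank (ZMod 2) (LinearMap.range ψ ⊔ LinearMap.ker φ :
        Submodule (ZMod 2) (Matrix (Fin s) (Fin n) (ZMod 2))) ≤ s * n := by
      rw [← hfrk]; exact Submodule.finrank_le _
    omega
  have hWne : (LinearMap.range ψ ⊓ LinearMap.ker φ :
      Submodule (ZMod 2) (Matrix (Fin s) (Fin n) (ZMod 2))) ≠ ⊥ := by
    intro h
    rw [h] at hWrank
    simp [finrank_bot] at hWrank
  obtain ⟨X₀, hX₀W, hX₀ne⟩ := Submodule.exists_mem_ne_zero_of_ne_bot hWne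
  obtain ⟨hX₀rng, hX₀ker⟩ := Submodule.mem_inf.1 hX₀W
  have hX₀P : X₀ ∈ ortho P := hker _ hX₀ker
  obtain ⟨Y, hY⟩ := hX₀rng
  have hzero : ∀ (i : Fin s) (j : Fin n), t ≤ (j : ℕ) → X₀ i j = 0 := by
    intro i j hj
    rw [← hY]
    show (if h : (j : ℕ) < t then Y i ⟨j, h⟩ else 0) = 0
    simp [Nat.not_lt.2 hj]
  -- Dick weight bound
  set G : ℕ := ∑ j ∈ Finset.range t, (j + 1) with hG
  have hG2 : 2 * G = t * (t + 1) := by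
    have h1 : ∑ j ∈ Finset.range (t + 1), j = G := by
      rw [Finset.sum_range_succ' (fun j => j) t]; simp [hG]
    have h2 := Finset.sum_range_id_mul_two (t + 1)
    rw [h1] at h2
    calc 2 * G = G * 2 := by ring
      _ = (t + 1) * (t + 1 - 1) := h2
      _ = t * (t + 1) := by simp [Nat.add_sub_cancel]; ring
  have hdick : 2 * dick X₀ ≤ s * (t * (t + 1)) := by
    have hrow : ∀ i : Fin s,
        (∑ j : Fin n, if X₀ i j = 1 then (j : ℕ) + 1 else 0) ≤ G := by
      intro i
      have h1 : (∑ j : Fin n, if X₀ i j = 1 then (j : ℕ) + 1 else 0)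
          ≤ ∑ j : Fin n, (if (j : ℕ) < t then (j : ℕ) + 1 else 0) := by
        apply Finset.sum_le_sum
        intro j _
        by_cases h : (j : ℕ) < t
        · simp only [h, if_true]
          split <;> omega
        · have := hzero i j (Nat.not_lt.1 h)
          simp [this, h]
      have h2 : (∑ j : Fin n, (if (j : ℕ) < t then (j : ℕ) + 1 else 0)) = G := by
        rw [Fin.sum_univ_eq_sum_range (fun j => if j < t then j + 1 else 0) n]
        rw [hG]
        rw [← Finset.sum_subset (Finset.range_subset_range.2 htn)]
        · apply Finset.sum_congr rfl
          intro j hj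
          simp [Finset.mem_range.1 hj]
        · intro j _ hj
          rw [Finset.mem_range] at hj
          simp [hj]
      omega
    have h3 : dick X₀ ≤ s * G := by
      unfold dick
      calc (∑ i : Fin s, ∑ j : Fin n, if X₀ i j = 1 then (j : ℕ) + 1 else 0)
          ≤ ∑ _i : Fin s, G := Finset.sum_le_sum (fun i _ => hrow i)
        _ = s * G := by simp [Finset.sum_const, mul_comm]
    calc 2 * dick X₀ ≤ 2 * (s * G) := by omega
      _ = s * (2 * G) := by ring
      _ = s * (t * (t + 1)) := by rw [hG2]
  -- real arithmetic
  set r : ℝ := (m : ℝ) / s with hrdef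
  have hr0 : 0 ≤ r := by positivity
  have hmsr : (m : ℝ) = s * r := by rw [hrdef]; field_simp
  have htr : (t : ℝ) ≤ r + 1 := by
    have h1 : ((m / s : ℕ) : ℝ) ≤ (m : ℝ) / s := Nat.cast_div_le
    rw [ht]
    push_cast
    linarith
  set q : ℝ := Real.sqrt (C' + 1 / 16) with hqdef
  have hq0 : 0 ≤ q := Real.sqrt_nonneg _
  have hqsq : q ^ 2 = C' + 1 / 16 := Real.sq_sqrt (by nlinarith)
  have ha : (0 : ℝ) < C' - 1 / 2 := by linarith
  have har : (C' - 1 / 2) * r ≥ q + 3 / 4 := by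
    have := (div_le_iff₀ ha).1 hratio
    linarith
  have hkey : (3 / 2) * r + 1 ≤ (C' - 1 / 2) * r ^ 2 := by
    have h2 : ((C' - 1 / 2) * r - (q + 3 / 4)) * ((C' - 1 / 2) * r + q - 3 / 4) ≥ 0 := by
      apply mul_nonneg <;> linarith
    nlinarith [h2, hqsq, ha, mul_pos ha ha]
  have hdickC : (dick X₀ : ℝ) ≤ C' * (m : ℝ) ^ 2 / s := by
    have h1 : (2 : ℝ) * (dick X₀ : ℝ) ≤ (s : ℝ) * ((t : ℝ) * ((t : ℝ) + 1)) := by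
      exact_mod_cast hdick
    have ht0 : (0 : ℝ) ≤ (t : ℝ) := by positivity
    have h2 : (s : ℝ) * ((t : ℝ) * ((t : ℝ) + 1)) ≤ (s : ℝ) * ((r + 1) * (r + 2)) := by
      have : (t : ℝ) * ((t : ℝ) + 1) ≤ (r + 1) * (r + 2) := by nlinarith
      nlinarith
    have h3 : (s : ℝ) * ((r + 1) * (r + 2)) ≤ 2 * (C' * (m : ℝ) ^ 2 / s) := by
      have hCm : C' * (m : ℝ) ^ 2 / s = C' * s * r ^ 2 := by
        rw [hmsr]; field_simp
      rw [hCm]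
      nlinarith [hkey, hsR, mul_le_mul_of_nonneg_left hkey (le_of_lt hsR)]
    linarith
  -- conclude
  have hterm : (2 : ℝ) ^ (-(dick X₀ : ℤ)) ≤ wafom P := by
    unfold wafom
    have h := Finset.single_le_sum
      (f := fun X : Matrix (Fin s) (Fin n) (ZMod 2) =>
        if X ∈ ortho P ∧ X ≠ 0 then (2 : ℝ) ^ (-(dick X : ℤ)) else 0)
      (fun X _ => by split_ifs <;> positivity) (Finset.mem_univ X₀)
    simpa [hX₀P, hX₀ne] using h
  have hzp : (2 : ℝ) ^ (-(dick X₀ : ℤ)) = (2 : ℝ) ^ (-((dick X₀ : ℕ) : ℝ)) := by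
    rw [← Real.rpow_intCast]
    push_cast
    ring_nf
  have hpow : (2 : ℝ) ^ (-(C' * (m : ℝ) ^ 2 / (s : ℝ))) ≤ (2 : ℝ) ^ (-(dick X₀ : ℤ)) := by
    rw [hzp]
    exact (Real.rpow_le_rpow_left_iff (by norm_num)).2 (by linarith)
  linarith
end

section
/- Let n, s, m be positive integers with m < ns, and let q, r be non-negative integers with m = sq + r and r < s. Then for every m-dimensional F₂-linear subspace 𝒫 of M_{s,n}(F₂), the minimum Dick weight of 𝒫^⊥ satisfies δ_{𝒫^⊥} ≤ sq(q+1)/2 + (q+1)(r+1). -/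
open scoped BigOperators

lemma two_mul_sum_range_succ (q : ℕ) : 2 * (∑ j ∈ Finset.range q, (j + 1)) = q * (q + 1) := by
  induction q with
  | zero => simp
  | succ q ih => rw [Finset.sum_range_succ, Nat.mul_add, ih]; ring

lemma sum_ite_lt (nn q : ℕ) (h : q ≤ nn) (v : ℕ → ℕ) :
    (∑ j ∈ Finset.range nn, if j < q then v j else 0) = ∑ j ∈ Finset.range q, v j := by
  rw [← Finset.sum_subset (Finset.range_subset_range.2 h)
    (fun x _ hx => by rw [if_neg]; simpa using hx)]
  exact Finset.sum_congr rfl fun x hx => by rw [if_pos (Finset.mem_range.1 hx)]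

lemma sum_ite_le (ss r c : ℕ) (h : r < ss) :
    (∑ i ∈ Finset.range ss, if i ≤ r then c else 0) = (r + 1) * c := by
  have : (∑ j ∈ Finset.range ss, if j < r + 1 then c else 0) = ∑ j ∈ Finset.range (r+1), c :=
    sum_ite_lt ss (r+1) h (fun _ => c)
  simp only [Nat.lt_succ_iff] at this
  rw [this, Finset.sum_const, Finset.card_range, smul_eq_mul]

lemma sumS (ss nn q r : ℕ) (hq : q < nn) (hr : r < ss) (v : ℕ → ℕ) :
    (∑ i ∈ Finset.range ss, ∑ j ∈ Finset.range nn,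
        if j < q ∨ (j = q ∧ i ≤ r) then v j else 0)
      = ss * (∑ j ∈ Finset.range q, v j) + (r + 1) * v q := by
  have key : ∀ i, (∑ j ∈ Finset.range nn, if j < q ∨ (j = q ∧ i ≤ r) then v j else 0)
      = (∑ j ∈ Finset.range q, v j) + (if i ≤ r then v q else 0) := by
    intro i
    have : ∀ j, (if j < q ∨ (j = q ∧ i ≤ r) then v j else 0)
        = (if j < q then v j else 0) + (if j = q ∧ i ≤ r then v j else 0) := by
      intro j; split_ifs <;> omega
    rw [Finset.sum_congr rfl fun j _ => this j, Finset.sum_add_distrib,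
      sum_ite_lt nn q hq.le v]
    congr 1
    by_cases hi : i ≤ r
    · simp only [hi, and_true, if_true]
      rw [Finset.sum_ite_eq' (Finset.range nn) q v, if_pos (Finset.mem_range.2 hq)]
    · simp [hi]
  rw [Finset.sum_congr rfl fun i _ => key i, Finset.sum_add_distrib, Finset.sum_const,
    Finset.card_range, smul_eq_mul, sum_ite_le ss r (v q) hr]

/-- inner product as a linear map in the first argument -/
def ipL {s n : ℕ} (X : Matrix (Fin s) (Fin n) (ZMod 2)) :
    Matrix (Fin s) (Fin n) (ZMod 2) →ₗ[ZMod 2] ZMod 2 where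
  toFun A := ∑ i : Fin s, ∑ j : Fin n, A i j * X i j
  map_add' A B := by
    simp [Matrix.add_apply, add_mul, Finset.sum_add_distrib]
  map_smul' c A := by
    simp [Matrix.smul_apply, smul_eq_mul, Finset.mul_sum, mul_assoc]

/-- Lemma 3.2 (a): if `m = sq + r` with `0 ≤ r < s`, then every `m`-dimensional
subspace `P` of `M_{s,n}(𝔽₂)` satisfies `δ_{P^⊥} ≤ sq(q+1)/2 + (q+1)(r+1)`. -/
theorem minWeight_upper_bound (n s m q r : ℕ) (hn : 0 < n) (hs : 0 < s) (hm : 0 < m)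
    (hmns : m < n * s) (hqr : m = s * q + r) (hr : r < s)
    (P : Submodule (ZMod 2) (Matrix (Fin s) (Fin n) (ZMod 2)))
    (hdim : Module.finrank (ZMod 2) P = m) :
    (minWeight P : ℝ) ≤ (s : ℝ) * q * (q + 1) / 2 + (q + 1) * (r + 1) := by
  classical
  -- q < n
  have hqn : q < n := by
    have h1 : s * q < s * n := by nlinarith
    exact lt_of_mul_lt_mul_left h1 (Nat.zero_le s)
  -- the support condition
  set cond : Fin s × Fin n → Prop :=
    fun p => (p.2 : ℕ) < q ∨ ((p.2 : ℕ) = q ∧ (p.1 : ℕ) ≤ r) with hcond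
  have hdec : DecidablePred cond := fun p => by unfold cond; infer_instance
  -- cardinality of the support
  have hcard : Fintype.card {p : Fin s × Fin n // cond p} = m + 1 := by
    rw [Fintype.card_subtype, Finset.card_filter, Fintype.sum_prod_type]
    have : ∀ i : Fin s, (∑ j : Fin n, if cond (i, j) then 1 else 0)
        = ∑ j ∈ Finset.range n, if j < q ∨ (j = q ∧ (i : ℕ) ≤ r) then (fun _ => 1) j else 0 := by
      intro i
      rw [← Fin.sum_univ_eq_sum_range
        (fun jj => if jj < q ∨ (jj = q ∧ (i : ℕ) ≤ r) then (fun _ => 1) jj else 0) n]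
      exact Finset.sum_congr rfl fun j _ => by simp only [hcond]
    rw [Finset.sum_congr rfl fun i _ => this i,
      Fin.sum_univ_eq_sum_range (fun ii => ∑ j ∈ Finset.range n,
        if j < q ∨ (j = q ∧ ii ≤ r) then (fun _ => 1) j else 0) s,
      sumS s n q r hqn hr (fun _ => 1)]
    simp [hqr]; ring
  -- basis of P
  have : Module.Finite (ZMod 2) P := inferInstance
  let b : Module.Basis (Fin m) (ZMod 2) P := Module.finBasisOfFinrankEq (ZMod 2) P hdim
  -- matrix from a support function
  let M : ({p : Fin s × Fin n // cond p} → ZMod 2) → Matrix (Fin s) (Fin n) (ZMod 2) :=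
    fun f i j => if h : cond (i, j) then f ⟨(i, j), h⟩ else 0
  -- pigeonhole
  let F : ({p : Fin s × Fin n // cond p} → ZMod 2) → (Fin m → ZMod 2) :=
    fun f k => ipL (M f) (b k)
  have hcards : Fintype.card (Fin m → ZMod 2)
      < Fintype.card ({p : Fin s × Fin n // cond p} → ZMod 2) := by
    rw [Fintype.card_fun, Fintype.card_fun, hcard, ZMod.card, Fintype.card_fin]
    exact Nat.pow_lt_pow_right (by norm_num) (Nat.lt_succ_self m)
  obtain ⟨f, g, hfg, hFfg⟩ := Fintype.exists_ne_map_eq_of_card_lt F hcards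
  -- the nonzero element of the orthogonal complement
  set X : Matrix (Fin s) (Fin n) (ZMod 2) := M f - M g with hX
  have hXentry : ∀ i j, X i j = (if h : cond (i, j) then f ⟨(i, j), h⟩ - g ⟨(i, j), h⟩ else 0) := by
    intro i j
    rw [hX, Matrix.sub_apply]
    simp only [M]
    split_ifs <;> simp
  have hXne : X ≠ 0 := by
    intro h0
    apply hfg
    funext p
    obtain ⟨⟨i, j⟩, hp⟩ := p
    have h1 := hXentry i j
    rw [h0] at h1
    simp only [Matrix.zero_apply] at h1
    rw [dif_pos hp] at h1
    exact sub_eq_zero.mp h1.symm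
  have hXb : ∀ k : Fin m, ipL X ((b k : P) : Matrix (Fin s) (Fin n) (ZMod 2)) = 0 := by
    intro k
    have h1 : ipL X ((b k : P) : Matrix (Fin s) (Fin n) (ZMod 2)) = F f k - F g k := by
      simp only [ipL, F, LinearMap.coe_mk, AddHom.coe_mk, hX, Matrix.sub_apply, mul_sub,
        Finset.sum_sub_distrib]
    rw [h1, hFfg, sub_self]
  have hXmem : X ∈ ortho P := by
    intro A hA
    show ipL X A = 0
    have hrep := b.sum_repr ⟨A, hA⟩
    have hAeq : A = ∑ k : Fin m, (b.repr ⟨A, hA⟩ k) • ((b k : P) : Matrix (Fin s) (Fin n) (ZMod 2)) := by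
      have := congrArg (Subtype.val) hrep
      simp only [Submodule.coe_sum, Submodule.coe_smul] at this
      exact this.symm
    rw [hAeq, map_sum]
    simp only [map_smul]
    rw [Finset.sum_eq_zero]
    intro k _
    rw [hXb k, smul_zero]
  -- dick weight bound
  have hW : dick X ≤ s * (∑ j ∈ Finset.range q, (j + 1)) + (r + 1) * (q + 1) := by
    have hle : dick X ≤ ∑ i : Fin s, ∑ j : Fin n, if cond (i, j) then (j : ℕ) + 1 else 0 := by
      unfold dick
      refine Finset.sum_le_sum fun i _ => Finset.sum_le_sum fun j _ => ?_
      by_cases hc : cond (i, j)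
      · rw [if_pos hc]; split_ifs <;> omega
      · rw [if_neg hc]
        have : X i j = 0 := by rw [hXentry i j, dif_neg hc]
        rw [this, if_neg (by decide)]
    refine hle.trans (le_of_eq ?_)
    have : ∀ i : Fin s, (∑ j : Fin n, if cond (i, j) then (j : ℕ) + 1 else 0)
        = ∑ j ∈ Finset.range n, if j < q ∨ (j = q ∧ (i : ℕ) ≤ r) then j + 1 else 0 := by
      intro i
      rw [← Fin.sum_univ_eq_sum_range
        (fun jj => if jj < q ∨ (jj = q ∧ (i : ℕ) ≤ r) then jj + 1 else 0) n]
      exact Finset.sum_congr rfl fun j _ => by simp only [hcond]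
    rw [Finset.sum_congr rfl fun i _ => this i,
      Fin.sum_univ_eq_sum_range (fun ii => ∑ j ∈ Finset.range n,
        if j < q ∨ (j = q ∧ ii ≤ r) then j + 1 else 0) s,
      sumS s n q r hqn hr (fun j => j + 1)]
  -- minWeight ≤ dick X
  have hmin : minWeight P ≤ dick X := Nat.sInf_le ⟨X, hXmem, hXne, rfl⟩
  -- conclude over ℝ
  have h2 : 2 * dick X ≤ s * (q * (q + 1)) + 2 * ((r + 1) * (q + 1)) := by
    calc 2 * dick X ≤ 2 * (s * (∑ j ∈ Finset.range q, (j + 1)) + (r + 1) * (q + 1)) :=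
          Nat.mul_le_mul_left 2 hW
      _ = s * (2 * (∑ j ∈ Finset.range q, (j + 1))) + 2 * ((r + 1) * (q + 1)) := by ring
      _ = s * (q * (q + 1)) + 2 * ((r + 1) * (q + 1)) := by rw [two_mul_sum_range_succ]
  have hminR : (minWeight P : ℝ) ≤ (dick X : ℝ) := Nat.cast_le.2 hmin
  have h2R : (2 : ℝ) * dick X ≤ s * (q * (q + 1)) + 2 * ((r + 1) * (q + 1)) := by
    exact_mod_cast h2
  linarith
end

section
/- Let n, s, m be positive integers with m < ns, and let C' be a real number greater than 1/2. If m/s ≥ (√(C' + 1/16) + 3/4)/(C' − 1/2), then for every m-dimensional F₂-linear subspace 𝒫 of M_{s,n}(F₂), the minimum Dick weight of 𝒫^⊥ satisfies δ_{𝒫^⊥} ≤ C'·m²/s. -/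
open scoped BigOperators

open Module in
noncomputable def bform (s n : ℕ) : Matrix (Fin s) (Fin n) (ZMod 2) →ₗ[ZMod 2]
    Matrix (Fin s) (Fin n) (ZMod 2) →ₗ[ZMod 2] ZMod 2 :=
  LinearMap.mk₂ (ZMod 2) (fun A X => ∑ i, ∑ j, A i j * X i j)
    (by intros; simp [Matrix.add_apply, add_mul, Finset.sum_add_distrib])
    (by intros c A X; simp [Matrix.smul_apply, smul_eq_mul, Finset.mul_sum, mul_assoc])
    (by intros; simp [Matrix.add_apply, mul_add, Finset.sum_add_distrib])
    (by intros c A X; simp [Matrix.smul_apply, smul_eq_mul, Finset.mul_sum, mul_left_comm])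

lemma bform_inj {s n : ℕ} : Function.Injective ((bform s n).flip) := by
  rw [injective_iff_map_eq_zero]
  intro X hX
  ext i j
  have h := congrArg (fun f => f (Matrix.single i j 1)) hX
  simp only [bform, LinearMap.flip_apply, LinearMap.mk₂_apply, LinearMap.zero_apply] at h
  have : X i j = 0 := by
    rw [← h]
    simp [Matrix.single, Matrix.of_apply, ite_and, Finset.sum_ite_eq, Finset.sum_ite_eq']
  simpa using this

open Module in
noncomputable def bequiv (s n : ℕ) : Matrix (Fin s) (Fin n) (ZMod 2) ≃ₗ[ZMod 2]
    Module.Dual (ZMod 2) (Matrix (Fin s) (Fin n) (ZMod 2)) :=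
  LinearEquiv.ofBijective ((bform s n).flip)
    ⟨bform_inj, by
      rw [← LinearMap.range_eq_top]
      apply Submodule.eq_top_of_finrank_eq
      rw [LinearMap.finrank_range_of_inj bform_inj, Subspace.dual_finrank_eq]⟩

lemma ortho_eq {s n : ℕ} (P : Submodule (ZMod 2) (Matrix (Fin s) (Fin n) (ZMod 2))) :
    ortho P = P.dualAnnihilator.comap (bequiv s n).toLinearMap := by
  ext X
  simp only [Submodule.mem_comap, Submodule.mem_dualAnnihilator]
  rfl

open Module in
lemma finrank_ortho {s n : ℕ} (P : Submodule (ZMod 2) (Matrix (Fin s) (Fin n) (ZMod 2))) :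
    finrank (ZMod 2) (ortho P) = s * n - finrank (ZMod 2) P := by
  rw [ortho_eq, Submodule.comap_equiv_eq_map_symm,
    LinearEquiv.finrank_map_eq (bequiv s n).symm P.dualAnnihilator]
  have hq : finrank (ZMod 2) (Matrix (Fin s) (Fin n) (ZMod 2) ⧸ P)
      = finrank (ZMod 2) P.dualAnnihilator :=
    LinearEquiv.finrank_eq (Subspace.quotEquivAnnihilator P)
  have := Submodule.finrank_quotient_add_finrank P
  have h3 := Submodule.finrank_le P
  have h2 : finrank (ZMod 2) (Matrix (Fin s) (Fin n) (ZMod 2)) = s * n := by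
    simp [Module.finrank_matrix]
  omega

def incl (s n t : ℕ) : Matrix (Fin s) (Fin t) (ZMod 2) →ₗ[ZMod 2]
    Matrix (Fin s) (Fin n) (ZMod 2) where
  toFun X := Matrix.of fun i j => if h : (j : ℕ) < t then X i ⟨(j : ℕ), h⟩ else 0
  map_add' := by intros X Y; ext i j; by_cases h : (j : ℕ) < t <;> simp [h]
  map_smul' := by intros c X; ext i j; by_cases h : (j : ℕ) < t <;> simp [h]

lemma incl_inj {s n t : ℕ} (ht : t ≤ n) : Function.Injective (incl s n t) := by
  intro X Y hXY
  ext i k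
  have := congrFun (congrFun
    (congrArg (fun M => (M : Matrix (Fin s) (Fin n) (ZMod 2))) hXY) i)
    ⟨(k : ℕ), lt_of_lt_of_le k.2 ht⟩
  simpa [incl, k.2] using this

open Module in
lemma finrank_incl_range {s n t : ℕ} (ht : t ≤ n) :
    finrank (ZMod 2) (LinearMap.range (incl s n t)) = s * t := by
  rw [LinearMap.finrank_range_of_inj (incl_inj ht)]
  simp [Module.finrank_matrix]

lemma incl_support {s n t : ℕ} (X : Matrix (Fin s) (Fin n) (ZMod 2))
    (hX : X ∈ LinearMap.range (incl s n t))
    (i : Fin s) (j : Fin n) (hj : t ≤ (j : ℕ)) : X i j = 0 := by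
  obtain ⟨Y, rfl⟩ := hX
  simp [incl, Nat.not_lt.mpr hj]

lemma dick_le {s n t : ℕ} (ht : t ≤ n) (X : Matrix (Fin s) (Fin n) (ZMod 2))
    (hX : ∀ (i : Fin s) (j : Fin n), t ≤ (j : ℕ) → X i j = 0) :
    2 * dick X ≤ s * (t * (t + 1)) := by
  have h1 : ∀ i : Fin s, (∑ j : Fin n, if X i j = 1 then (j : ℕ) + 1 else 0)
      ≤ ∑ k ∈ Finset.range t, (k + 1) := by
    intro i
    have : (∑ j : Fin n, if X i j = 1 then (j : ℕ) + 1 else 0)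
        ≤ ∑ j : Fin n, (if (j : ℕ) < t then (j : ℕ) + 1 else 0) := by
      apply Finset.sum_le_sum
      intro j _
      by_cases h : (j : ℕ) < t
      · simp only [if_pos h]; split <;> omega
      · rw [hX i j (Nat.not_lt.mp h)]
        simp
    refine this.trans ?_
    rw [Fin.sum_univ_eq_sum_range (fun k => if k < t then k + 1 else 0) n]
    rw [← Finset.sum_subset (Finset.range_subset_range.2 ht)
      (by intro k _ hk; simp at hk; simp [hk])]
    apply le_of_eq
    apply Finset.sum_congr rfl
    intro k hk
    simp [Finset.mem_range.mp hk]
  have h2 : 2 * ∑ k ∈ Finset.range t, (k + 1) = t * (t + 1) := by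
    have ha := Finset.sum_range_id_mul_two t
    have hb : ∑ k ∈ Finset.range t, (k + 1)
        = (∑ k ∈ Finset.range t, k) + t := by
      rw [Finset.sum_add_distrib]; simp
    have hc : t * (t + 1) = t * (t - 1) + 2 * t := by
      cases t with
      | zero => simp
      | succ u => simp [Nat.succ_sub_one]; ring
    omega
  calc 2 * dick X
      ≤ 2 * ∑ _i : Fin s, ∑ k ∈ Finset.range t, (k + 1) := by
        exact Nat.mul_le_mul_left 2 (Finset.sum_le_sum fun i _ => h1 i)
    _ = s * (t * (t + 1)) := by
        rw [Finset.sum_const, Finset.card_univ, Fintype.card_fin, smul_eq_mul]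
        rw [← Nat.mul_assoc, Nat.mul_comm 2 s, Nat.mul_assoc, h2]

lemma arith_key (m s t : ℕ) (hs : 0 < s) (hm : 0 < m) (C' : ℝ) (hC' : 1 / 2 < C')
    (hratio : (m : ℝ) / s ≥ (Real.sqrt (C' + 1 / 16) + 3 / 4) / (C' - 1 / 2))
    (ht : (t : ℝ) ≤ (m : ℝ) / s + 1) :
    (s : ℝ) * ((t : ℝ) * ((t : ℝ) + 1)) / 2 ≤ C' * (m : ℝ) ^ 2 / (s : ℝ) := by
  have hs' : (0 : ℝ) < s := by exact_mod_cast hs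
  have hm' : (0 : ℝ) < m := by exact_mod_cast hm
  set r : ℝ := (m : ℝ) / s with hr
  have hrpos : 0 < r := div_pos hm' hs'
  set q : ℝ := Real.sqrt (C' + 1 / 16) with hq
  have hq0 : 0 ≤ q := Real.sqrt_nonneg _
  have hq2 : q ^ 2 = C' + 1 / 16 := Real.sq_sqrt (by linarith)
  have hc : (0 : ℝ) < C' - 1 / 2 := by linarith
  have h1 : (C' - 1 / 2) * r ≥ q + 3 / 4 := by
    rw [ge_iff_le, ← div_le_iff₀' hc]
    exact hratio
  have h2 : q - 3 / 4 > 0 := by nlinarith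
  have h3 : r * q - 3 / 4 * r ≥ 1 := by
    have := mul_nonneg (by linarith : (0:ℝ) ≤ (C' - 1/2) * r - (q + 3/4)) h2.le
    nlinarith
  have key : (t : ℝ) * ((t : ℝ) + 1) ≤ 2 * C' * r ^ 2 := by
    have ht0 : (0 : ℝ) ≤ (t : ℝ) := Nat.cast_nonneg t
    have h4 : (t : ℝ) * ((t : ℝ) + 1) ≤ (r + 1) * (r + 2) := by nlinarith
    have h5 : (r + 1) * (r + 2) ≤ 2 * C' * r ^ 2 := by
      nlinarith [mul_nonneg hrpos.le
        (by linarith : (0:ℝ) ≤ (C' - 1/2) * r - (q + 3/4))]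
    linarith
  have hms : C' * (m : ℝ) ^ 2 / s = C' * r ^ 2 * s := by
    field_simp [hr]
    rw [hr]; field_simp
  rw [hms]
  calc (s : ℝ) * ((t : ℝ) * ((t : ℝ) + 1)) / 2 ≤ (s : ℝ) * (2 * C' * r ^ 2) / 2 := by
        apply div_le_div_of_nonneg_right ?_ (by norm_num)
        exact mul_le_mul_of_nonneg_left key hs'.le
    _ = C' * r ^ 2 * s := by ring

/-- Lemma 3.2 (b): for `C' > 1/2` and `m/s ≥ (√(C'+1/16)+3/4)/(C'-1/2)`,
every `m`-dimensional subspace `P` of `M_{s,n}(𝔽₂)` satisfies `δ_{P^⊥} ≤ C'm²/s`. -/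
theorem minWeight_upper_bound' (n s m : ℕ) (hn : 0 < n) (hs : 0 < s) (hm : 0 < m)
    (hmns : m < n * s) (C' : ℝ) (hC' : 1 / 2 < C')
    (hratio : (m : ℝ) / s ≥ (Real.sqrt (C' + 1 / 16) + 3 / 4) / (C' - 1 / 2))
    (P : Submodule (ZMod 2) (Matrix (Fin s) (Fin n) (ZMod 2)))
    (hdim : Module.finrank (ZMod 2) P = m) :
    (minWeight P : ℝ) ≤ C' * (m : ℝ) ^ 2 / (s : ℝ) := by
  classical
  open Module in
  set t := m / s + 1 with htdef
  have h1 := Nat.div_add_mod m s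
  have h2 := Nat.mod_lt m hs
  have hts : m < s * t := by
    calc m = s * (m / s) + m % s := h1.symm
      _ < s * (m / s) + s := by omega
      _ = s * t := by rw [htdef]; ring
  have htn : t ≤ n := by
    have := (Nat.div_lt_iff_lt_mul hs).mpr hmns
    omega
  set Q := LinearMap.range (incl s n t) with hQdef
  have hQ : Module.finrank (ZMod 2) Q = s * t := finrank_incl_range htn
  have hO : Module.finrank (ZMod 2) (ortho P) = s * n - m := by
    rw [finrank_ortho, hdim]
  have hsup : Module.finrank (ZMod 2)
      (Q ⊔ ortho P : Submodule (ZMod 2) (Matrix (Fin s) (Fin n) (ZMod 2))) ≤ s * n := by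
    have := Submodule.finrank_le (Q ⊔ ortho P)
    simpa [Module.finrank_matrix] using this
  have heq := Submodule.finrank_sup_add_finrank_inf_eq Q (ortho P)
  rw [hQ, hO] at heq
  have hmsn : m ≤ s * n := by
    have : n * s = s * n := Nat.mul_comm n s
    omega
  have hpos : 0 < Module.finrank (ZMod 2)
      (Q ⊓ ortho P : Submodule (ZMod 2) (Matrix (Fin s) (Fin n) (ZMod 2))) := by
    omega
  have hne : (Q ⊓ ortho P : Submodule (ZMod 2) (Matrix (Fin s) (Fin n) (ZMod 2))) ≠ ⊥ := by
    intro h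
    rw [h] at hpos
    simp at hpos
  obtain ⟨X, hXmem, hX0⟩ := Submodule.exists_mem_ne_zero_of_ne_bot hne
  obtain ⟨hXQ, hXP⟩ := Submodule.mem_inf.mp hXmem
  have hsupp : ∀ (i : Fin s) (j : Fin n), t ≤ (j : ℕ) → X i j = 0 :=
    fun i j hj => incl_support X hXQ i j hj
  have hdick : 2 * dick X ≤ s * (t * (t + 1)) := dick_le htn X hsupp
  have hmin : minWeight P ≤ dick X := Nat.sInf_le ⟨X, hXP, hX0, rfl⟩
  have htR : (t : ℝ) ≤ (m : ℝ) / s + 1 := by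
    rw [htdef]
    push_cast
    have := Nat.cast_div_le (α := ℝ) (m := m) (n := s)
    linarith
  calc (minWeight P : ℝ) ≤ (dick X : ℝ) := by exact_mod_cast hmin
    _ ≤ (s : ℝ) * ((t : ℝ) * ((t : ℝ) + 1)) / 2 := by
        rw [le_div_iff₀ (by norm_num : (0:ℝ) < 2)]
        have : ((2 * dick X : ℕ) : ℝ) ≤ ((s * (t * (t + 1)) : ℕ) : ℝ) := by
          exact_mod_cast hdick
        rw [htdef] at this ⊢
        push_cast at this ⊢
        linarith
    _ ≤ C' * (m : ℝ) ^ 2 / s := arith_key m s t hs hm C' hC' hratio htR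
end
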